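/- Let G be a connected graph with Perron vector x, and let u, v be vertices of G. Suppose v_1,…,v_s are vertices in N_G(v)\N_G(u) with 1 ≤ s ≤ d_G(v), and let G* be the graph obtained from G by deleting the edges v v_i and adding the edges u v_i for 1 ≤ i ≤ s. If x(u) ≥ x(v), then ρ(G) < ρ(G*). -/

import Mathlib

open Matrix BigOperators
open scoped RealInnerProductSpace

open scoped Classical in
noncomputable def adjMat {V : Type*} [Fintype V] (G : SimpleGraph V) : Matrix V V ℝ :=
  Matrix.of fun a b => if G.Adj a b then (1 : ℝ) else 0

/-- `x` is the Perron vector of the adjacency matrix of `G`, with corresponding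
eigenvalue `ρ`, the spectral radius (largest eigenvalue). -/
def IsPerronVector {V : Type*} [Fintype V] [DecidableEq V] (G : SimpleGraph V)
    (x : V → ℝ) (ρ : ℝ) : Prop :=
  (∀ v, 0 < x v) ∧ (∑ v, (x v) ^ 2 = 1) ∧ (adjMat G *ᵥ x = ρ • x) ∧
    IsGreatest {t : ℝ | Module.End.HasEigenvalue (Matrix.toLin' (adjMat G)) t} ρ

/-- The spectral radius of a real symmetric matrix: the largest (real) eigenvalue. -/
noncomputable def specRad {V : Type*} [Fintype V] [DecidableEq V] (M : Matrix V V ℝ) : ℝ :=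
  sSup {t : ℝ | Module.End.HasEigenvalue (Matrix.toLin' M) t}

variable {n : ℕ}

noncomputable def toE {n : ℕ} (y : Fin n → ℝ) : EuclideanSpace ℝ (Fin n) :=
  (WithLp.equiv 2 (Fin n → ℝ)).symm y

noncomputable def clm {n : ℕ} (M : Matrix (Fin n) (Fin n) ℝ) :
    EuclideanSpace ℝ (Fin n) →L[ℝ] EuclideanSpace ℝ (Fin n) :=
  LinearMap.toContinuousLinearMap (Matrix.toEuclideanLin M)

lemma clm_apply (M : Matrix (Fin n) (Fin n) ℝ) (y : Fin n → ℝ) :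
    clm M (toE y) = toE (M *ᵥ y) := rfl

lemma inner_toE (z y : Fin n → ℝ) : (inner ℝ (toE z) (toE y) : ℝ) = z ⬝ᵥ y := by
  simp [toE, PiLp.inner_apply, dotProduct, RCLike.inner_apply, mul_comm]

lemma reApply_toE (M : Matrix (Fin n) (Fin n) ℝ) (y : Fin n → ℝ) :
    (clm M).reApplyInnerSelf (toE y) = (M *ᵥ y) ⬝ᵥ y := by
  rw [ContinuousLinearMap.reApplyInnerSelf, clm_apply, inner_toE]
  simp

lemma norm_sq_toE (y : Fin n → ℝ) : ‖toE y‖ ^ 2 = ∑ i, y i ^ 2 := by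
  rw [← real_inner_self_eq_norm_sq, inner_toE]
  simp [dotProduct, sq]

lemma toE_eq_zero_iff (y : Fin n → ℝ) : toE y = 0 ↔ y = 0 := by
  rw [toE, Equiv.symm_apply_eq]; constructor <;> intro h <;> simp [h]

lemma euclid_eigen_iff (M : Matrix (Fin n) (Fin n) ℝ) (t : ℝ) (y : Fin n → ℝ) :
    Matrix.toEuclideanLin M (toE y) = t • toE y ↔ M *ᵥ y = t • y := by
  constructor
  · intro h
    have := congrArg (WithLp.equiv 2 (Fin n → ℝ)) h
    simpa [toE] using this
  · intro h
    show toE (M *ᵥ y) = t • toE y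
    rw [h]
    rfl

lemma hasEig_iff (M : Matrix (Fin n) (Fin n) ℝ) (t : ℝ) :
    Module.End.HasEigenvalue (Matrix.toLin' M) t ↔
      Module.End.HasEigenvalue (Matrix.toEuclideanLin M) t := by
  constructor
  · intro h
    obtain ⟨y, hy1, hy2⟩ := h.exists_hasEigenvector
    rw [Module.End.mem_eigenspace_iff] at hy1
    refine Module.End.hasEigenvalue_of_hasEigenvector (x := toE y) ⟨?_, ?_⟩
    · rw [Module.End.mem_eigenspace_iff, euclid_eigen_iff]
      simpa [Matrix.toLin'_apply] using hy1
    · simpa [toE_eq_zero_iff] using hy2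
  · intro h
    obtain ⟨y, hy1, hy2⟩ := h.exists_hasEigenvector
    rw [Module.End.mem_eigenspace_iff] at hy1
    set z := WithLp.equiv 2 (Fin n → ℝ) y with hz
    have hyz : y = toE z := rfl
    rw [hyz, euclid_eigen_iff] at hy1
    refine Module.End.hasEigenvalue_of_hasEigenvector (x := z) ⟨?_, ?_⟩
    · rw [Module.End.mem_eigenspace_iff, Matrix.toLin'_apply]
      exact hy1
    · intro hzero
      apply hy2
      rw [hyz, hzero]
      rfl

noncomputable def Rsup (M : Matrix (Fin n) (Fin n) ℝ) : ℝ :=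
  ⨆ x : {x : EuclideanSpace ℝ (Fin n) // x ≠ 0}, (clm M).rayleighQuotient x

lemma rayleigh_eq (M : Matrix (Fin n) (Fin n) ℝ) (y : EuclideanSpace ℝ (Fin n)) :
    (clm M).rayleighQuotient y = (inner ℝ (clm M y) y : ℝ) / ‖y‖ ^ 2 := rfl

lemma rayleigh_le_norm (M : Matrix (Fin n) (Fin n) ℝ) (y : EuclideanSpace ℝ (Fin n)) :
    (clm M).rayleighQuotient y ≤ ‖clm M‖ := by
  rcases eq_or_ne y 0 with rfl | hy
  · have : (clm M).rayleighQuotient 0 = 0 := by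
      rw [rayleigh_eq]; simp
    rw [this]
    exact norm_nonneg _
  · have hn : (0:ℝ) < ‖y‖ ^ 2 := by
      have := norm_pos_iff.mpr hy
      positivity
    rw [rayleigh_eq, div_le_iff₀ hn]
    calc (inner ℝ (clm M y) y : ℝ) ≤ ‖clm M y‖ * ‖y‖ := real_inner_le_norm _ _
      _ ≤ (‖clm M‖ * ‖y‖) * ‖y‖ := by gcongr; exact (clm M).le_opNorm y
      _ = ‖clm M‖ * ‖y‖ ^ 2 := by ring

lemma bdd (M : Matrix (Fin n) (Fin n) ℝ) :
    BddAbove (Set.range fun x : {x : EuclideanSpace ℝ (Fin n) // x ≠ 0} =>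
      (clm M).rayleighQuotient x) :=
  ⟨‖clm M‖, by rintro _ ⟨y, rfl⟩; exact rayleigh_le_norm M y⟩

lemma eig_le_Rsup (M : Matrix (Fin n) (Fin n) ℝ) {t : ℝ}
    (h : Module.End.HasEigenvalue (Matrix.toEuclideanLin M) t) : t ≤ Rsup M := by
  obtain ⟨y, hy1, hy2⟩ := h.exists_hasEigenvector
  rw [Module.End.mem_eigenspace_iff] at hy1
  have hr : (clm M).rayleighQuotient y = t := by
    rw [rayleigh_eq]
    have hcy : clm M y = t • y := hy1
    rw [hcy, real_inner_smul_left, real_inner_self_eq_norm_sq]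
    have hn : (0:ℝ) < ‖y‖ ^ 2 := by
      have := norm_pos_iff.mpr hy2
      positivity
    field_simp
  rw [← hr]
  exact le_ciSup (bdd M) (⟨y, hy2⟩ : {x : EuclideanSpace ℝ (Fin n) // x ≠ 0})

lemma Rsup_eig (M : Matrix (Fin n) (Fin n) ℝ) (hM : M.IsHermitian) (hn : 0 < n) :
    Module.End.HasEigenvalue (Matrix.toEuclideanLin M) (Rsup M) := by
  haveI : Nonempty (Fin n) := ⟨⟨0, hn⟩⟩
  have hsym : (Matrix.toEuclideanLin M).IsSymmetric :=
    (Matrix.isHermitian_iff_isSymmetric).mp hM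
  have h := hsym.hasEigenvalue_iSup_of_finiteDimensional
  convert h using 1 <;> rfl


lemma specRad_isGreatest (M : Matrix (Fin n) (Fin n) ℝ) (hM : M.IsHermitian) (hn : 0 < n) :
    IsGreatest {t : ℝ | Module.End.HasEigenvalue (Matrix.toLin' M) t} (Rsup M) := by
  constructor
  · rw [Set.mem_setOf_eq, hasEig_iff]; exact Rsup_eig M hM hn
  · intro t ht
    rw [Set.mem_setOf_eq, hasEig_iff] at ht
    exact eig_le_Rsup M ht

lemma specRad_eq (M : Matrix (Fin n) (Fin n) ℝ) (hM : M.IsHermitian) (hn : 0 < n) :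
    specRad M = Rsup M :=
  (specRad_isGreatest M hM hn).csSup_eq

lemma toE_ne_zero {y : Fin n → ℝ} (hy : ∑ i, y i ^ 2 = 1) : toE y ≠ 0 := by
  intro h
  rw [toE_eq_zero_iff] at h
  rw [h] at hy
  simp at hy

lemma norm_toE_one {y : Fin n → ℝ} (hy : ∑ i, y i ^ 2 = 1) : ‖toE y‖ = 1 := by
  have h := norm_sq_toE y
  rw [hy] at h
  nlinarith [norm_nonneg (toE y)]

lemma rayleigh_toE (M : Matrix (Fin n) (Fin n) ℝ) {y : Fin n → ℝ} (hy : ∑ i, y i ^ 2 = 1) :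
    (clm M).rayleighQuotient (toE y) = (M *ᵥ y) ⬝ᵥ y := by
  rw [rayleigh_eq, clm_apply, inner_toE, norm_toE_one hy]
  simp

lemma quad_le_specRad (M : Matrix (Fin n) (Fin n) ℝ) (hM : M.IsHermitian) (hn : 0 < n)
    {y : Fin n → ℝ} (hy : ∑ i, y i ^ 2 = 1) : (M *ᵥ y) ⬝ᵥ y ≤ specRad M := by
  rw [specRad_eq M hM hn, ← rayleigh_toE M hy]
  exact le_ciSup (bdd M) (⟨toE y, toE_ne_zero hy⟩ : {x : EuclideanSpace ℝ (Fin n) // x ≠ 0})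

lemma eq_case (M : Matrix (Fin n) (Fin n) ℝ) (hM : M.IsHermitian) (hn : 0 < n)
    {y : Fin n → ℝ} (hy : ∑ i, y i ^ 2 = 1) (heq : (M *ᵥ y) ⬝ᵥ y = specRad M) :
    M *ᵥ y = specRad M • y := by
  have hsym : (Matrix.toEuclideanLin M).IsSymmetric :=
    (Matrix.isHermitian_iff_isSymmetric).mp hM
  have hself : IsSelfAdjoint (clm M) := by
    apply LinearMap.IsSymmetric.isSelfAdjoint
    exact hsym
  have hmax : IsMaxOn (clm M).reApplyInnerSelf (Metric.sphere (0 : EuclideanSpace ℝ (Fin n)) ‖toE y‖) (toE y) := by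
    intro z hz
    have hz1 : ‖z‖ = 1 := by
      have := Metric.mem_sphere.mp hz
      rwa [dist_zero_right, norm_toE_one hy] at this
    have h1 : (clm M).reApplyInnerSelf z = (clm M).rayleighQuotient z := by
      rw [rayleigh_eq, hz1]
      simp [ContinuousLinearMap.reApplyInnerSelf]
    have h2 : (clm M).reApplyInnerSelf (toE y) = (clm M).rayleighQuotient (toE y) := by
      rw [rayleigh_eq, norm_toE_one hy]
      simp [ContinuousLinearMap.reApplyInnerSelf]
    simp only [Set.mem_setOf_eq, h1, h2]
    rw [rayleigh_toE M hy, heq, specRad_eq M hM hn]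
    exact le_ciSup (bdd M) (⟨z, by rw [← norm_ne_zero_iff, hz1]; norm_num⟩ :
      {x : EuclideanSpace ℝ (Fin n) // x ≠ 0})
  have hev := hself.hasEigenvector_of_isMaxOn (toE_ne_zero hy) hmax
  have heig : Matrix.toEuclideanLin M (toE y) = Rsup M • toE y := by
    have := hev.1
    rw [Module.End.mem_eigenspace_iff] at this
    exact this
  rw [specRad_eq M hM hn]
  exact (euclid_eigen_iff M (Rsup M) y).mp heig

open scoped Classical in
noncomputable def pmat {n s : ℕ} (w : Fin s → Fin n) (c : Fin n) : Matrix (Fin n) (Fin n) ℝ :=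
  Matrix.of fun a b => (if a = c then (1:ℝ) else 0) * (if b ∈ Set.range w then 1 else 0)
    + (if b = c then (1:ℝ) else 0) * (if a ∈ Set.range w then 1 else 0)

open scoped Classical in
lemma pmat_apply {n s : ℕ} (w : Fin s → Fin n) (c : Fin n) (hc : c ∉ Set.range w) (a b : Fin n) :
    pmat w c a b = if (∃ i, s(c, w i) = s(a, b)) then 1 else 0 := by
  have hkey : (∃ i, s(c, w i) = s(a, b)) ↔ ((a = c ∧ b ∈ Set.range w) ∨ (b = c ∧ a ∈ Set.range w)) := by
    constructor
    · rintro ⟨i, hi⟩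
      rw [Sym2.eq_iff] at hi
      rcases hi with ⟨h1, h2⟩ | ⟨h1, h2⟩
      · exact Or.inl ⟨h1.symm, ⟨i, h2⟩⟩
      · exact Or.inr ⟨h1.symm, ⟨i, h2⟩⟩
    · rintro (⟨rfl, i, rfl⟩ | ⟨rfl, i, rfl⟩) <;> exact ⟨i, by rw [Sym2.eq_iff]; tauto⟩
  simp only [hkey, pmat]
  by_cases h1 : a = c <;> by_cases h2 : b = c <;>
    by_cases h3 : a ∈ Set.range w <;> by_cases h4 : b ∈ Set.range w <;>
    simp_all <;> tauto

lemma decomp {n s : ℕ} (G : SimpleGraph (Fin n)) (u v : Fin n) (w : Fin s → Fin n)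
    (hadj : ∀ i, G.Adj v (w i)) (hnadj : ∀ i, ¬ G.Adj u (w i))
    (hwu : ∀ i, w i ≠ u) (hwv : ∀ i, w i ≠ v) (huv : u ≠ v) :
    adjMat (SimpleGraph.fromEdgeSet
        ((G.edgeSet \ Set.range fun i => s(v, w i)) ∪ Set.range fun i => s(u, w i)))
      = adjMat G + pmat w u - pmat w v := by
  have hwuSet : u ∉ Set.range w := by rintro ⟨i, hi⟩; exact hwu i hi
  have hwvSet : v ∉ Set.range w := by rintro ⟨i, hi⟩; exact hwv i hi
  ext a b
  have hp_adj : (∃ i, s(v, w i) = s(a, b)) → G.Adj a b := by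
    rintro ⟨i, hi⟩
    rw [Sym2.eq_iff] at hi
    rcases hi with ⟨h1, h2⟩ | ⟨h1, h2⟩
    · rw [← h1, ← h2]; exact hadj i
    · rw [← h1, ← h2]; exact (hadj i).symm
  have hq_nadj : (∃ i, s(u, w i) = s(a, b)) → ¬ G.Adj a b ∧ a ≠ b := by
    rintro ⟨i, hi⟩
    rw [Sym2.eq_iff] at hi
    rcases hi with ⟨h1, h2⟩ | ⟨h1, h2⟩
    · rw [← h1, ← h2]; exact ⟨hnadj i, fun h => hwu i h.symm⟩
    · rw [← h1, ← h2]; exact ⟨fun h => hnadj i h.symm, hwu i⟩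
  have hpq : ¬ ((∃ i, s(v, w i) = s(a, b)) ∧ (∃ i, s(u, w i) = s(a, b))) := by
    rintro ⟨⟨i, hi⟩, ⟨j, hj⟩⟩
    rw [← hj, Sym2.eq_iff] at hi
    rcases hi with ⟨h1, h2⟩ | ⟨h1, h2⟩
    · exact huv h1.symm
    · exact hwv j h1.symm
  simp only [Matrix.sub_apply, Matrix.add_apply, adjMat, Matrix.of_apply,
    SimpleGraph.fromEdgeSet_adj, Set.mem_union, Set.mem_diff, Set.mem_range,
    SimpleGraph.mem_edgeSet, pmat_apply w u hwuSet, pmat_apply w v hwvSet]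
  by_cases hp : (∃ i, s(v, w i) = s(a, b)) <;> by_cases hq : (∃ i, s(u, w i) = s(a, b)) <;>
    by_cases hA : G.Adj a b
  · exact absurd ⟨hp, hq⟩ hpq
  · exact absurd ⟨hp, hq⟩ hpq
  · rw [if_pos hA, if_neg hq, if_pos hp,
      if_neg (by rintro ⟨h | h, -⟩; exacts [h.2 hp, hq h])]
    ring
  · exact absurd (hp_adj hp) hA
  · exact absurd hA (hq_nadj hq).1
  · rw [if_neg hA, if_pos hq, if_neg hp, if_pos ⟨Or.inr hq, (hq_nadj hq).2⟩]
    ring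
  · rw [if_pos hA, if_neg hq, if_neg hp, if_pos ⟨Or.inl ⟨hA, hp⟩, hA.ne⟩]
    ring
  · rw [if_neg hA, if_neg hq, if_neg hp,
      if_neg (by rintro ⟨h | h, -⟩; exacts [hA h.1, hq h])]
    ring

open scoped Classical in
lemma sum_ind {n s : ℕ} {w : Fin s → Fin n} (hinj : Function.Injective w) (f : Fin n → ℝ) :
    ∑ b, (if b ∈ Set.range w then (1:ℝ) else 0) * f b = ∑ i, f (w i) := by
  have h1 : ∀ b : Fin n, (if b ∈ Set.range w then (1:ℝ) else 0) * f b
      = if b ∈ Finset.image w Finset.univ then f b else 0 := by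
    intro b
    by_cases hb : b ∈ Set.range w
    · rw [if_pos hb, if_pos (by simpa [Finset.mem_image] using hb), one_mul]
    · rw [if_neg hb, if_neg (by simpa [Finset.mem_image] using hb), zero_mul]
  rw [Finset.sum_congr rfl fun b _ => h1 b, Finset.sum_ite_mem, Finset.univ_inter,
    Finset.sum_image (fun i _ j _ h => hinj h)]

open scoped Classical in
lemma pmat_row {n s : ℕ} {w : Fin s → Fin n} (hinj : Function.Injective w) (c : Fin n)
    (x : Fin n → ℝ) (a : Fin n) :
    (pmat w c *ᵥ x) a = (if a = c then 1 else 0) * (∑ i, x (w i))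
      + (if a ∈ Set.range w then 1 else 0) * x c := by
  simp only [Matrix.mulVec, dotProduct, pmat, Matrix.of_apply, add_mul,
    Finset.sum_add_distrib]
  congr 1
  · rw [← sum_ind hinj x, Finset.mul_sum]
    exact Finset.sum_congr rfl fun b _ => by ring
  · have : ∀ b : Fin n, (if b = c then (1:ℝ) else 0) * (if a ∈ Set.range w then (1:ℝ) else 0) * x b
        = if b = c then (if a ∈ Set.range w then (1:ℝ) else 0) * x b else 0 := by
      intro b; by_cases hb : b = c <;> simp [hb]
    rw [Finset.sum_congr rfl fun b _ => this b, Finset.sum_ite_eq' Finset.univ c]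
    simp

open scoped Classical in
lemma pmat_quad {n s : ℕ} {w : Fin s → Fin n} (hinj : Function.Injective w) (c : Fin n)
    (x : Fin n → ℝ) :
    (pmat w c *ᵥ x) ⬝ᵥ x = 2 * x c * ∑ i, x (w i) := by
  simp only [dotProduct, pmat_row hinj c x, add_mul, Finset.sum_add_distrib]
  have h1 : ∑ a, (if a = c then (1:ℝ) else 0) * (∑ i, x (w i)) * x a
      = (∑ i, x (w i)) * x c := by
    have : ∀ a : Fin n, (if a = c then (1:ℝ) else 0) * (∑ i, x (w i)) * x a
        = if a = c then (∑ i, x (w i)) * x a else 0 := by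
      intro a; by_cases ha : a = c <;> simp [ha]
    rw [Finset.sum_congr rfl fun a _ => this a, Finset.sum_ite_eq' Finset.univ c]
    simp
  have h2 : ∑ a, (if a ∈ Set.range w then (1:ℝ) else 0) * x c * x a
      = x c * ∑ i, x (w i) := by
    rw [← sum_ind hinj x, Finset.mul_sum]
    exact Finset.sum_congr rfl fun a _ => by ring
  rw [h1, h2]; ring

lemma adj_herm {V : Type*} [Fintype V] (G : SimpleGraph V) : (adjMat G).IsHermitian := by
  ext a b
  simp only [adjMat, Matrix.conjTranspose_apply, Matrix.of_apply, star_trivial]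
  rw [G.adj_comm]


theorem stmt3 {n : ℕ} (G : SimpleGraph (Fin n)) (hG : G.Connected)
    (x : Fin n → ℝ) (ρ : ℝ) (hx : IsPerronVector G x ρ)
    (u v : Fin n) (s : ℕ) (hs1 : 1 ≤ s) (hsd : s ≤ (G.neighborSet v).ncard)
    (w : Fin s → Fin n) (hinj : Function.Injective w)
    (hw : ∀ i, w i ∈ G.neighborSet v \ G.neighborSet u) (hwu : ∀ i, w i ≠ u)
    (Gstar : SimpleGraph (Fin n))
    (hGstar : Gstar = SimpleGraph.fromEdgeSet
      ((G.edgeSet \ Set.range fun i => s(v, w i)) ∪ Set.range fun i => s(u, w i)))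
    (hxuv : x v ≤ x u) :
    specRad (adjMat G) < specRad (adjMat Gstar) := by
  obtain ⟨hxpos, hxnorm, hxeig, hxgreat⟩ := hx
  have hn : 0 < n := u.pos
  have i0 : Fin s := ⟨0, hs1⟩
  have hadj : ∀ i, G.Adj v (w i) := fun i => (hw i).1
  have hnadj : ∀ i, ¬ G.Adj u (w i) := fun i => (hw i).2
  have hwv : ∀ i, w i ≠ v := fun i => (hadj i).ne'
  have huv : u ≠ v := by
    rintro rfl
    exact hnadj i0 (hadj i0)
  have hvr : v ∉ Set.range w := by rintro ⟨i, hi⟩; exact hwv i hi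
  have hur : u ∉ Set.range w := by rintro ⟨i, hi⟩; exact hwu i hi
  have hρ : specRad (adjMat G) = ρ := hxgreat.csSup_eq
  have hS : 0 < ∑ i, x (w i) :=
    Finset.sum_pos (fun i _ => hxpos _) ⟨i0, Finset.mem_univ _⟩
  have hBdecomp : adjMat Gstar = adjMat G + pmat w u - pmat w v := by
    rw [hGstar]; exact decomp G u v w hadj hnadj hwu hwv huv
  have hB_herm : (adjMat Gstar).IsHermitian := adj_herm Gstar
  have hxx : x ⬝ᵥ x = 1 := by simpa [dotProduct, sq] using hxnorm
  have hAq : (adjMat G *ᵥ x) ⬝ᵥ x = ρ := by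
    rw [hxeig, smul_dotProduct, hxx, smul_eq_mul, mul_one]
  have hBq : (adjMat Gstar *ᵥ x) ⬝ᵥ x
      = ρ + 2 * x u * (∑ i, x (w i)) - 2 * x v * (∑ i, x (w i)) := by
    rw [hBdecomp, Matrix.sub_mulVec, Matrix.add_mulVec, sub_dotProduct,
      add_dotProduct, hAq, pmat_quad hinj u x, pmat_quad hinj v x]
  have hle : ρ ≤ (adjMat Gstar *ᵥ x) ⬝ᵥ x := by
    rw [hBq]; nlinarith [hS, hxuv]
  have hle2 : (adjMat Gstar *ᵥ x) ⬝ᵥ x ≤ specRad (adjMat Gstar) :=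
    quad_le_specRad _ hB_herm hn hxnorm
  rw [hρ]
  by_contra hcon
  push_neg at hcon
  have hspec : specRad (adjMat Gstar) = ρ := le_antisymm hcon (le_trans hle hle2)
  have heq1 : (adjMat Gstar *ᵥ x) ⬝ᵥ x = specRad (adjMat Gstar) :=
    le_antisymm hle2 (hspec ▸ hle)
  have heig := eq_case (adjMat Gstar) hB_herm hn hxnorm heq1
  have hv := congrFun heig v
  rw [hspec] at hv
  have hAv : (adjMat G *ᵥ x) v = ρ * x v := by
    rw [hxeig]; simp
  have hQv : (pmat w u *ᵥ x) v = 0 := by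
    rw [pmat_row hinj u x v, if_neg huv.symm, if_neg hvr]
    ring
  have hPv : (pmat w v *ᵥ x) v = ∑ i, x (w i) := by
    rw [pmat_row hinj v x v, if_pos rfl, if_neg hvr]
    ring
  have hBv : (adjMat Gstar *ᵥ x) v = ρ * x v - ∑ i, x (w i) := by
    rw [hBdecomp, Matrix.sub_mulVec, Matrix.add_mulVec]
    simp only [Pi.sub_apply, Pi.add_apply]
    rw [hAv, hQv, hPv]
    ring
  rw [hBv] at hv
  simp only [Pi.smul_apply, smul_eq_mul] at hv
  linarith
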